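/- Let t_1,...,t_n be distinct nonzero complex numbers and a_1,...,a_n each equal to 1 or 2. Let I(1) = {i : a_i = 1} and I(2) = {i : a_i = 2}. Then for any s distinct from all t_i: product over i of (s/(s - t_i))^{a_i} equals [sum over i in I(1) of (product over j≠i of (t_i/(t_i - t_j))^{a_j}) · s/(s - t_i)] plus [sum over i in I(2) of (product over j≠i of (t_i/(t_i - t_j))^{a_j}) · (s·t_i/(s - t_i)^2 + (1 + sum over j≠i of a_j·t_j/(t_j - t_i)) · s/(s - t_i))]. -/

import Mathlib

open Finset Polynomial

lemma sq_dvd_of_root_of_root_deriv {p : ℂ[X]} {c : ℂ} (h1 : p.eval c = 0)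
    (h2 : p.derivative.eval c = 0) : (X - C c) ^ 2 ∣ p := by
  obtain ⟨q, hq⟩ := (dvd_iff_isRoot.2 h1 : (X - C c) ∣ p)
  have hd : Polynomial.derivative p = q + (X - C c) * Polynomial.derivative q := by
    rw [hq, derivative_mul]; simp
  have hqc : q.eval c = 0 := by
    have h3 := h2; rw [hd] at h3; simpa using h3
  obtain ⟨r, hr⟩ := (dvd_iff_isRoot.2 hqc : (X - C c) ∣ q)
  exact ⟨r, by rw [hq, hr]; ring⟩

lemma derivative_finset_prod {ι : Type*} [DecidableEq ι] (s : Finset ι) (f : ι → ℂ[X]) :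
    Polynomial.derivative (∏ i ∈ s, f i)
      = ∑ i ∈ s, (∏ j ∈ s.erase i, f j) * Polynomial.derivative (f i) := by
  induction s using Finset.induction_on with
  | empty => simp
  | insert c s' h ih =>
    rw [Finset.prod_insert h, derivative_mul, ih, Finset.sum_insert h, Finset.erase_insert h]
    rw [Finset.mul_sum, mul_comm (Polynomial.derivative (f c))]
    congr 1
    refine Finset.sum_congr rfl fun j hj => ?_
    have hcj : c ≠ j := fun e => h (e ▸ hj)
    rw [Finset.erase_insert_of_ne hcj, Finset.prod_insert (fun hc => h (Finset.mem_of_mem_erase hc))]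
    ring

theorem prod_pow_decomposition (n : ℕ) (hn : 0 < n) (t : Fin n → ℂ) (s : ℂ)
    (a : Fin n → ℕ) (ha : ∀ i, a i = 1 ∨ a i = 2)
    (ht : ∀ i, t i ≠ 0) (hs : s ≠ 0) (hinj : Function.Injective t)
    (hst : ∀ i, s ≠ t i) :
    ∏ i, (s / (s - t i)) ^ a i
      = (∑ i ∈ univ.filter (fun i => a i = 1),
            (∏ j ∈ univ.erase i, (t i / (t i - t j)) ^ a j) * (s / (s - t i)))
        + ∑ i ∈ univ.filter (fun i => a i = 2),
            (∏ j ∈ univ.erase i, (t i / (t i - t j)) ^ a j) *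
              (s * t i / (s - t i) ^ 2
                + (1 + ∑ j ∈ univ.erase i, (a j : ℂ) * t j / (t j - t i))
                    * (s / (s - t i))) := by
  -- abbreviations
  set N : ℕ := ∑ i, a i with hN
  set A : Fin n → ℂ := fun i => ∏ j ∈ univ.erase i, (t i / (t i - t j)) ^ a j with hA
  set B : Fin n → ℂ := fun i => ∑ j ∈ univ.erase i, (a j : ℂ) * t j / (t j - t i) with hB
  set Qp : Fin n → ℂ[X] := fun i => ∏ j ∈ univ.erase i, (X - C (t j)) ^ a j with hQp
  set P : Fin n → ℂ[X] := fun i =>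
    if a i = 1 then C (A i) * (X * Qp i)
    else C (A i) * (C (t i) * (X * Qp i) + C (1 + B i) * (X * ((X - C (t i)) * Qp i))) with hP
  have hsub : ∀ ⦃i j : Fin n⦄, i ≠ j → t i - t j ≠ 0 :=
    fun i j h => sub_ne_zero.2 (fun e => h (hinj e))
  have hssub : ∀ i, s - t i ≠ 0 := fun i => sub_ne_zero.2 (hst i)
  have hNsplit : ∀ k, N = a k + ∑ j ∈ univ.erase k, a j := by
    intro k; rw [hN, ← Finset.add_sum_erase univ a (mem_univ k)]
  have hApos : ∀ k, A k * (∏ j ∈ univ.erase k, (t k - t j) ^ a j)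
      = t k ^ (∑ j ∈ univ.erase k, a j) := by
    intro k
    rw [hA, ← Finset.prod_mul_distrib, ← Finset.prod_pow_eq_pow_sum]
    refine Finset.prod_congr rfl fun j hj => ?_
    have h1 : t k - t j ≠ 0 := hsub (Finset.ne_of_mem_erase hj).symm
    rw [div_pow, div_mul_cancel₀ _ (pow_ne_zero _ h1)]
  -- divisibility at each t k
  have hqev : ∀ k, (Qp k).eval (t k) = ∏ j ∈ univ.erase k, (t k - t j) ^ a j := by
    intro k; simp [hQp, eval_prod]
  have hdvd : ∀ k, ((X : ℂ[X]) - C (t k)) ^ a k ∣ (X ^ N - ∑ i, P i) := by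
    intro k
    have hsplit : (X ^ N - ∑ i, P i : ℂ[X])
        = (X ^ N - P k) - ∑ i ∈ univ.erase k, P i := by
      rw [← Finset.add_sum_erase univ P (mem_univ k)]; ring
    rw [hsplit]
    refine dvd_sub ?_ (Finset.dvd_sum fun i hi => ?_)
    · -- the i = k term
      rcases ha k with h1 | h2
      · rw [h1, pow_one]
        refine dvd_iff_isRoot.2 ?_
        have hm := hNsplit k; rw [h1] at hm
        have e1 : A k * (t k * ((Qp k).eval (t k))) = t k ^ N := by
          rw [hqev k, hm, pow_add, pow_one, ← hApos k]; ring
        simp only [IsRoot, eval_sub, eval_pow, eval_X, hP, if_pos h1, eval_mul, eval_C]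
        rw [e1]; ring
      · rw [h2]
        have hm := hNsplit k; rw [h2] at hm
        have hane : a k ≠ 1 := by omega
        have hAq : A k * ((Qp k).eval (t k)) = t k ^ (∑ j ∈ univ.erase k, a j) := by
          rw [hqev k, hApos k]
        refine sq_dvd_of_root_of_root_deriv ?_ ?_
        · simp only [eval_sub, eval_pow, eval_X, hP, if_neg hane, eval_mul, eval_add, eval_C,
            sub_self, zero_mul, mul_zero, add_zero]
          have e1 : A k * (t k * (t k * ((Qp k).eval (t k)))) = t k ^ N := by
            rw [hm, pow_add, pow_two, mul_assoc, ← hAq]; ring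
          rw [← e1]; ring
        · -- derivative vanishes
          set m : ℕ := ∑ j ∈ univ.erase k, a j with hmdef
          have hq' : (Polynomial.derivative (Qp k)).eval (t k)
              = ∑ j ∈ univ.erase k,
                  (∏ l ∈ (univ.erase k).erase j, (t k - t l) ^ a l)
                    * ((a j : ℂ) * (t k - t j) ^ (a j - 1)) := by
            rw [hQp]
            rw [derivative_finset_prod]
            rw [eval_finset_sum]
            refine Finset.sum_congr rfl fun j hj => ?_
            rw [derivative_pow, eval_mul, eval_prod]
            simp [eval_pow, eval_prod]
          have hqd : A k * ((Polynomial.derivative (Qp k)).eval (t k))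
              = ∑ j ∈ univ.erase k, (a j : ℂ) * t k ^ m / (t k - t j) := by
            rw [hq', Finset.mul_sum]
            refine Finset.sum_congr rfl fun j hj => ?_
            have hjk : t k - t j ≠ 0 := hsub (Finset.ne_of_mem_erase hj).symm
            rw [eq_div_iff hjk]
            have hpow : (t k - t j) ^ (a j - 1) * (t k - t j) = (t k - t j) ^ a j := by
              rw [← pow_succ]
              congr 1
              rcases ha j with h | h <;> omega
            have hfull : (t k - t j) ^ a j * ∏ l ∈ (univ.erase k).erase j, (t k - t l) ^ a l
                = ∏ l ∈ univ.erase k, (t k - t l) ^ a l :=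
              Finset.mul_prod_erase (univ.erase k) (fun l => (t k - t l) ^ a l) hj
            calc A k * ((∏ l ∈ (univ.erase k).erase j, (t k - t l) ^ a l)
                    * ((a j : ℂ) * (t k - t j) ^ (a j - 1))) * (t k - t j)
                = (a j : ℂ) * (A k * ((t k - t j) ^ (a j - 1) * (t k - t j)
                    * ∏ l ∈ (univ.erase k).erase j, (t k - t l) ^ a l)) := by ring
              _ = (a j : ℂ) * (A k * ((t k - t j) ^ a j
                    * ∏ l ∈ (univ.erase k).erase j, (t k - t l) ^ a l)) := by rw [hpow]
              _ = (a j : ℂ) * (A k * ∏ l ∈ univ.erase k, (t k - t l) ^ a l) := by rw [hfull]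
              _ = (a j : ℂ) * t k ^ m := by rw [hApos k]
          have hPd : (Polynomial.derivative (P k)).eval (t k)
              = t k * (A k * ((Qp k).eval (t k)))
                + t k * t k * (A k * ((Polynomial.derivative (Qp k)).eval (t k)))
                + (1 + B k) * (t k * (A k * ((Qp k).eval (t k)))) := by
            simp only [hP, if_neg hane, derivative_mul, derivative_add, derivative_C,
              derivative_X, derivative_sub, eval_add, eval_mul, eval_sub, eval_C, eval_X,
              sub_self, zero_mul, mul_zero, add_zero, zero_add, mul_one, one_mul,
              eval_one, eval_zero]
            ring
          show (Polynomial.derivative (X ^ N - P k)).eval (t k) = 0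
          rw [derivative_sub, eval_sub, hPd, derivative_X_pow, eval_mul, eval_C, eval_pow, eval_X,
            hAq, hqd]
          have hN1 : N - 1 = m + 1 := by omega
          have hNc : (N : ℂ) = (m : ℂ) + 2 := by rw [hm]; push_cast; ring
          have hmc : (m : ℂ) = ∑ j ∈ univ.erase k, (a j : ℂ) := by
            rw [hmdef]; push_cast; rfl
          have hcomb : t k * t k * (∑ j ∈ univ.erase k, (a j : ℂ) * t k ^ m / (t k - t j))
              + (∑ j ∈ univ.erase k, (a j : ℂ) * t j / (t j - t k)) * (t k * t k ^ m)
              = (∑ j ∈ univ.erase k, (a j : ℂ)) * t k ^ (m + 1) := by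
            rw [Finset.mul_sum, Finset.sum_mul, Finset.sum_mul, ← Finset.sum_add_distrib]
            refine Finset.sum_congr rfl fun j hj => ?_
            have hjk : t k - t j ≠ 0 := hsub (Finset.ne_of_mem_erase hj).symm
            have hkj : t j - t k ≠ 0 := hsub (Finset.ne_of_mem_erase hj)
            field_simp
            ring
          simp only [hB]
          rw [hN1, hNc, hmc]
          linear_combination (-1 : ℂ) * hcomb
    · -- the i ≠ k terms
      have hik : i ≠ k := Finset.ne_of_mem_erase hi
      have hkm : k ∈ univ.erase i := Finset.mem_erase.2 ⟨fun h => hik h.symm, mem_univ k⟩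
      have hdq : ((X : ℂ[X]) - C (t k)) ^ a k ∣ Qp i := by
        rw [hQp]
        exact Finset.dvd_prod_of_mem _ hkm
      by_cases h1 : a i = 1
      · simp only [hP, if_pos h1]
        exact (hdq.mul_left _).mul_left _
      · simp only [hP, if_neg h1]
        exact (dvd_add ((hdq.mul_left _).mul_left _) (((hdq.mul_left _).mul_left _).mul_left _)).mul_left _
  have hNpos : 0 < N := by
    obtain ⟨i0⟩ := Fin.pos_iff_nonempty.mp hn
    have h1 : 0 < a i0 := by rcases ha i0 with h | h <;> omega
    exact lt_of_lt_of_le h1 (Finset.single_le_sum (fun j _ => Nat.zero_le _) (mem_univ i0))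
  -- root at 0
  have h0 : (X : ℂ[X]) ∣ (X ^ N - ∑ i, P i) := by
    have h2 : ((X : ℂ[X]) - C 0) ∣ (X ^ N - ∑ i, P i) := by
      refine dvd_iff_isRoot.2 ?_
      have h3 : ∀ i, (P i).eval 0 = 0 := by
        intro i
        by_cases h4 : a i = 1 <;> simp [hP, h4]
      simp [IsRoot, eval_finset_sum, h3, zero_pow hNpos.ne']
    simpa using h2
  -- degree bound
  have hmul : ∀ (p q : ℂ[X]) (m k : ℕ), p.natDegree ≤ m → q.natDegree ≤ k →
      (p * q).natDegree ≤ m + k := fun p q m k hp hq =>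
    le_trans (natDegree_mul_le) (add_le_add hp hq)
  have hQdeg : ∀ i, (Qp i).natDegree ≤ ∑ j ∈ univ.erase i, a j := by
    intro i
    refine le_trans (Polynomial.natDegree_prod_le _ _) (le_of_eq ?_)
    refine Finset.sum_congr rfl fun j _ => ?_
    rw [natDegree_pow, natDegree_X_sub_C, mul_one]
  have hPdeg : ∀ i, (P i).natDegree ≤ N := by
    intro i
    by_cases h1 : a i = 1
    · simp only [hP, if_pos h1]
      have h2 := hmul (C (A i)) (X * Qp i) 0 N (natDegree_C _).le
        (by
          have := hmul X (Qp i) 1 (∑ j ∈ univ.erase i, a j) natDegree_X_le (hQdeg i)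
          refine le_trans this (le_of_eq ?_)
          rw [hNsplit i, h1])
      simpa using h2
    · have h1' : a i = 2 := (ha i).resolve_left h1
      simp only [hP, if_neg h1]
      have hb1 : (C (t i) * (X * Qp i)).natDegree ≤ N := by
        have h2 := hmul (C (t i)) (X * Qp i) 0 N (natDegree_C _).le
          (by
            have := hmul X (Qp i) 1 (∑ j ∈ univ.erase i, a j) natDegree_X_le (hQdeg i)
            refine le_trans this ?_
            rw [hNsplit i, h1']; omega)
        simpa using h2
      have hb2 : (C (1 + B i) * (X * ((X - C (t i)) * Qp i))).natDegree ≤ N := by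
        have h3 : ((X - C (t i)) * Qp i : ℂ[X]).natDegree ≤ 1 + ∑ j ∈ univ.erase i, a j :=
          hmul _ _ 1 _ (natDegree_X_sub_C _).le (hQdeg i)
        have h2 := hmul (C (1 + B i)) (X * ((X - C (t i)) * Qp i)) 0 N (natDegree_C _).le
          (by
            have := hmul X ((X - C (t i)) * Qp i) 1 (1 + ∑ j ∈ univ.erase i, a j)
              natDegree_X_le h3
            refine le_trans this (le_of_eq ?_)
            rw [hNsplit i, h1']; omega)
        simpa using h2
      have h4 := hmul (C (A i))
        (C (t i) * (X * Qp i) + C (1 + B i) * (X * ((X - C (t i)) * Qp i))) 0 N (natDegree_C _).le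
        (le_trans (natDegree_add_le _ _) (max_le hb1 hb2))
      simpa using h4
  have hprodne : ∀ i : Fin n, ((X : ℂ[X]) - C (t i)) ^ a i ≠ 0 :=
    fun i => pow_ne_zero _ (X_sub_C_ne_zero (t i))
  have hdeg : (X ^ N - ∑ i, P i : ℂ[X]).natDegree < (X * ∏ i, ((X : ℂ[X]) - C (t i)) ^ a i).natDegree := by
    have hr : (X * ∏ i, ((X : ℂ[X]) - C (t i)) ^ a i).natDegree = 1 + N := by
      rw [natDegree_mul X_ne_zero (Finset.prod_ne_zero_iff.2 fun i _ => hprodne i),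
        natDegree_X, Polynomial.natDegree_prod _ _ fun i _ => hprodne i]
      congr 1
      refine Finset.sum_congr rfl fun i _ => ?_
      rw [natDegree_pow, natDegree_X_sub_C, mul_one]
    have hl : (X ^ N - ∑ i, P i : ℂ[X]).natDegree ≤ N := by
      refine le_trans (natDegree_sub_le _ _) (max_le ?_ ?_)
      · simp [natDegree_X_pow]
      · exact Polynomial.natDegree_sum_le_of_forall_le _ _ fun i _ => hPdeg i
    omega
  -- D = 0
  have hD : (X ^ N - ∑ i, P i : ℂ[X]) = 0 := by
    refine Polynomial.eq_zero_of_dvd_of_natDegree_lt ?_ hdeg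
    refine IsCoprime.mul_dvd ?_ h0 ?_
    · refine IsCoprime.prod_right fun i _ => IsCoprime.pow_right ?_
      have h2 : IsCoprime ((X:ℂ[X]) - C 0) (X - C (t i)) :=
        Polynomial.isCoprime_X_sub_C_of_isUnit_sub
          (isUnit_iff_ne_zero.2 (by simpa using (ht i)))
      simpa using h2
    · refine Finset.prod_dvd_of_coprime ?_ fun i _ => hdvd i
      exact ((Polynomial.pairwise_coprime_X_sub_C hinj).mono fun i j h => h.pow).set_pairwise _
  -- evaluate at s
  have hEval : s ^ N = ∑ i, (P i).eval s := by
    have := congrArg (Polynomial.eval s) hD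
    simpa [sub_eq_zero, eval_finset_sum] using this
  -- final conversion
  have hQs : ∀ i, (Qp i).eval s = ∏ j ∈ univ.erase i, (s - t j) ^ a j := by
    intro i; simp [hQp, eval_prod]
  have hDen : (∏ i, (s - t i) ^ a i) ≠ 0 :=
    Finset.prod_ne_zero_iff.2 fun i _ => pow_ne_zero _ (hssub i)
  refine mul_right_cancel₀ hDen ?_
  have hL : (∏ i, (s / (s - t i)) ^ a i) * ∏ i, (s - t i) ^ a i = s ^ N := by
    rw [← Finset.prod_mul_distrib, ← Finset.prod_pow_eq_pow_sum]
    exact Finset.prod_congr rfl fun i _ => by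
      rw [div_pow, div_mul_cancel₀ _ (pow_ne_zero _ (hssub i))]
  rw [hL, hEval, add_mul, Finset.sum_mul, Finset.sum_mul,
    ← Finset.sum_filter_add_sum_filter_not univ (fun i => a i = 1) (fun i => (P i).eval s)]
  congr 1
  · refine Finset.sum_congr rfl fun i hi => ?_
    have h1 : a i = 1 := (Finset.mem_filter.1 hi).2
    have hden : (∏ j, (s - t j) ^ a j) = (s - t i) * ∏ j ∈ univ.erase i, (s - t j) ^ a j := by
      rw [← Finset.mul_prod_erase univ (fun j => (s - t j) ^ a j) (mem_univ i), h1, pow_one]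
    rw [hden]
    simp only [hP, if_pos h1, eval_mul, eval_X, eval_C]
    rw [hQs i]
    have hc : s / (s - t i) * (s - t i) = s := div_mul_cancel₀ _ (hssub i)
    linear_combination (-(A i * ∏ j ∈ univ.erase i, (s - t j) ^ a j)) * hc
  · have hfe : univ.filter (fun i => ¬ a i = 1) = univ.filter (fun i => a i = 2) := by
      refine Finset.filter_congr fun i _ => ?_
      rcases ha i with h | h <;> simp [h]
    rw [hfe]
    refine Finset.sum_congr rfl fun i hi => ?_
    have h2 : a i = 2 := (Finset.mem_filter.1 hi).2
    have h1 : ¬ a i = 1 := by omega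
    have hden : (∏ j, (s - t j) ^ a j) = (s - t i) ^ 2 * ∏ j ∈ univ.erase i, (s - t j) ^ a j := by
      rw [← Finset.mul_prod_erase univ (fun j => (s - t j) ^ a j) (mem_univ i), h2]
    rw [hden]
    simp only [hP, if_neg h1, eval_mul, eval_add, eval_C, eval_X, eval_sub]
    rw [hQs i]
    have hc : s / (s - t i) * (s - t i) = s := div_mul_cancel₀ _ (hssub i)
    have hc2 : s * t i / (s - t i) ^ 2 * (s - t i) ^ 2 = s * t i :=
      div_mul_cancel₀ _ (pow_ne_zero 2 (hssub i))
    linear_combination (-(A i * ∏ j ∈ univ.erase i, (s - t j) ^ a j)) * hc2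
      + (-(A i * (1 + B i) * (s - t i) * ∏ j ∈ univ.erase i, (s - t j) ^ a j)) * hc
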